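/- Let q ≥ 2 and a be integers with gcd(a, q) = 1. Let K, b, V be integers with gcd(q, V) = 1, gcd(b, K) = 1, and with the property that gcd(b-1, p) = 1 for every prime p dividing K with p ≡ -1 (mod 4) and p ≠ 3. Define s(q) as the product of the distinct primes p dividing q with p ≡ -1 (mod 4) and p ≠ 3. Then the exponential sum S = Σ over n mod q with gcd(KVn + b, q) = 1 and gcd(KVn + b - 1, s(q)) = 1 of e(an/q) satisfies |S| ≤ τ(q) if gcd(q, K) = 1, and S = 0 if gcd(q, K) > 1. -/

import Mathlib

set_option maxHeartbeats 1000000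

open Finset ArithmeticFunction ArithmeticFunction.Moebius

/-- `sFun q` is the product of the distinct primes `p ∣ q` with
`p ≡ -1 (mod 4)` and `p ≠ 3`. -/
def sFun (n : ℕ) : ℕ := ∏ p ∈ n.primeFactors.filter (fun p => p % 4 = 3 ∧ p ≠ 3), p

noncomputable def eFun (q : ℕ) (a : ℤ) (n : ℕ) : ℂ :=
  Complex.exp (2 * (Real.pi : ℂ) * Complex.I * a * n / q)

lemma eFun_abs (q : ℕ) (hq : 0 < q) (a : ℤ) (n : ℕ) : ‖eFun q a n‖ = 1 := by
  have : (2 * (Real.pi : ℂ) * Complex.I * a * n / q) = ((2 * Real.pi * a * n / q : ℝ) : ℂ) * Complex.I := by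
    push_cast
    have : (q:ℂ) ≠ 0 := Nat.cast_ne_zero.mpr hq.ne'
    field_simp
  rw [eFun, this, Complex.norm_exp_ofReal_mul_I]

lemma dvd_int_gcd (d : ℕ) (m : ℤ) (t : ℕ) : d ∣ Int.gcd m t ↔ (d:ℤ) ∣ m ∧ d ∣ t := by
  constructor
  · intro h
    exact ⟨(Int.natCast_dvd_natCast.mpr h).trans (Int.gcd_dvd_left _ _),
      Int.ofNat_dvd.mp ((Int.natCast_dvd_natCast.mpr h).trans (Int.gcd_dvd_right _ _))⟩
  · rintro ⟨h1, h2⟩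
    exact Int.natCast_dvd_natCast.mp (Int.dvd_coe_gcd h1 (Int.natCast_dvd_natCast.mpr h2))

lemma moebius_indicator (m : ℤ) (t : ℕ) (ht : t ≠ 0) :
    (if Int.gcd m t = 1 then (1:ℂ) else 0)
      = ∑ d ∈ t.divisors, if (d:ℤ) ∣ m then ((μ d : ℤ) : ℂ) else 0 := by
  rw [← sum_filter]
  have hfil : t.divisors.filter (fun d : ℕ => (d:ℤ) ∣ m) = (Int.gcd m t).divisors := by
    ext d
    simp only [mem_filter, Nat.mem_divisors]
    constructor
    · rintro ⟨⟨hdt, _⟩, hdm⟩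
      exact ⟨(dvd_int_gcd d m t).mpr ⟨hdm, hdt⟩, by
        simp [Int.gcd_eq_zero_iff, ht]⟩
    · rintro ⟨hd, _⟩
      obtain ⟨h1, h2⟩ := (dvd_int_gcd d m t).mp hd
      exact ⟨⟨h2, ht⟩, h1⟩
  rw [hfil]
  have hsum : (∑ d ∈ (Int.gcd m t).divisors, μ d) = if Int.gcd m t = 1 then 1 else 0 := by
    have := coe_mul_zeta_apply (f := (μ : ArithmeticFunction ℤ)) (x := Int.gcd m t)
    rw [moebius_mul_coe_zeta] at this
    rw [← this, one_apply]
  have : ((∑ d ∈ (Int.gcd m t).divisors, μ d : ℤ) : ℂ)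
      = ∑ d ∈ (Int.gcd m t).divisors, ((μ d : ℤ) : ℂ) := by push_cast; rfl
  rw [← this, hsum]
  split <;> simp

lemma reindex (m t : ℕ) (hm : 0 < m) (f : ℕ → ℂ) :
    ∑ n ∈ range (m * t), f n = ∑ p ∈ range m ×ˢ range t, f (p.1 + m * p.2) := by
  refine sum_nbij' (fun n => (n % m, n / m)) (fun p => p.1 + m * p.2) ?_ ?_ ?_ ?_ ?_
  · intro n hn
    simp only [mem_range] at hn
    simp only [mem_product, mem_range]
    exact ⟨Nat.mod_lt _ hm, Nat.div_lt_of_lt_mul (by omega)⟩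
  · intro p hp
    simp only [mem_product, mem_range] at hp
    simp only [mem_range]
    calc p.1 + m * p.2 < m + m * p.2 := by omega
    _ = m * (p.2 + 1) := by ring
    _ ≤ m * t := Nat.mul_le_mul_left _ (by omega)
  · intro n _; simp [Nat.mod_add_div]
  · intro p hp
    simp only [mem_product, mem_range] at hp
    have h1 : (p.1 + m * p.2) % m = p.1 := by
      rw [Nat.add_mul_mod_self_left, Nat.mod_eq_of_lt hp.1]
    have h2 : (p.1 + m * p.2) / m = p.2 := by
      rw [Nat.add_mul_div_left _ _ hm, Nat.div_eq_of_lt hp.1, zero_add]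
    simp [h1, h2]
  · intro n _; simp [Nat.mod_add_div]

lemma vanish (q m : ℕ) (a : ℤ) (hm : m ∣ q) (hlt : m < q) (hq : 0 < q)
    (ha : Int.gcd a q = 1) (P : ℕ → Prop) [DecidablePred P]
    (hP : ∀ i j : ℕ, P (i + m * j) ↔ P i) :
    ∑ n ∈ (range q).filter P, eFun q a n = 0 := by
  have hm0 : 0 < m := Nat.pos_of_dvd_of_pos hm hq
  obtain ⟨t, ht⟩ := hm
  have ht1 : 1 < t := by
    rcases Nat.lt_or_ge t 2 with h | h
    · interval_cases t <;> omega
    · omega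
  have hq0 : (q : ℂ) ≠ 0 := Nat.cast_ne_zero.mpr hq.ne'
  have hm0' : (m : ℂ) ≠ 0 := Nat.cast_ne_zero.mpr hm0.ne'
  have ht0' : (t : ℂ) ≠ 0 := Nat.cast_ne_zero.mpr (by omega)
  have hsplit : ∀ i j : ℕ, eFun q a (i + m * j)
      = eFun q a i * Complex.exp (2 * (Real.pi : ℂ) * Complex.I * a * m / q) ^ j := by
    intro i j
    rw [eFun, eFun, ← Complex.exp_nat_mul, ← Complex.exp_add]
    congr 1
    field_simp
    push_cast
    ring
  have hwt : Complex.exp (2 * (Real.pi : ℂ) * Complex.I * a * m / q) ^ t = 1 := by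
    rw [← Complex.exp_nat_mul]
    have heq : (t : ℂ) * (2 * (Real.pi : ℂ) * Complex.I * a * m / q)
        = a * (2 * Real.pi * Complex.I) := by
      have hqc : (q : ℂ) = (m : ℂ) * t := by rw [ht]; push_cast; ring
      rw [hqc]
      field_simp
    rw [heq, Complex.exp_int_mul_two_pi_mul_I]
  have hw1 : Complex.exp (2 * (Real.pi : ℂ) * Complex.I * a * m / q) ≠ 1 := by
    intro h
    rw [Complex.exp_eq_one_iff] at h
    obtain ⟨n, hn⟩ := h
    have hpi : (2 : ℂ) * Real.pi * Complex.I ≠ 0 := by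
      simp [Real.pi_ne_zero, Complex.I_ne_zero]
    have key : (a : ℂ) * m = n * q := by
      field_simp at hn
      have h2 : 2 * (Real.pi:ℂ) * Complex.I * (a * m) = 2 * Real.pi * Complex.I * (n * q) := by
        linear_combination (2 * (Real.pi:ℂ) * Complex.I) * hn
      exact mul_left_cancel₀ hpi h2
    have key2 : a * (m : ℤ) = n * q := by exact_mod_cast key
    have htdvd : (t : ℤ) ∣ a := by
      have hmz : (m : ℤ) ≠ 0 := by exact_mod_cast hm0.ne'
      refine ⟨n, ?_⟩
      have h3 : (m:ℤ) * a = m * (t * n) := by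
        have : (q : ℤ) = (m:ℤ) * t := by exact_mod_cast ht
        rw [mul_comm (m:ℤ) a, key2, this]; ring
      exact mul_left_cancel₀ hmz h3
    have : t ∣ Int.gcd a q := (dvd_int_gcd t a q).mpr ⟨htdvd, ⟨m, by rw [ht]; ring⟩⟩
    rw [ha] at this
    exact absurd (Nat.le_of_dvd one_pos this) (by omega)
  have hrange : range q = range (m * t) := by rw [ht]
  rw [sum_filter, hrange, reindex m t hm0, sum_product]
  have hinner : ∀ i ∈ range m,
      (∑ j ∈ range t, if P (i + m * j) then eFun q a (i + m * j) else 0)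
      = (if P i then eFun q a i else 0)
        * ∑ j ∈ range t, Complex.exp (2 * (Real.pi : ℂ) * Complex.I * a * m / q) ^ j := by
    intro i _
    rw [mul_sum]
    refine sum_congr rfl fun j _ => ?_
    simp only [hP i j]
    rw [hsplit i j]
    split <;> simp
  rw [sum_congr rfl hinner]
  have : (∑ j ∈ range t, Complex.exp (2 * (Real.pi : ℂ) * Complex.I * a * m / q) ^ j) = 0 := by
    rw [geom_sum_eq hw1, hwt]
    simp
  simp [this]

lemma term_vanish (q : ℕ) (hq : 0 < q) (a c b : ℤ) (ha : Int.gcd a q = 1)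
    (d e : ℕ) (hd : d ∣ q) (he : e ∣ q) (hlcm : Nat.lcm d e ≠ q) :
    ∑ n ∈ (range q).filter
      (fun n : ℕ => (d:ℤ) ∣ c * n + b ∧ (e:ℤ) ∣ c * n + b - 1), eFun q a n = 0 := by
  apply vanish q (Nat.lcm d e) a (Nat.lcm_dvd hd he)
    (lt_of_le_of_ne (Nat.le_of_dvd hq (Nat.lcm_dvd hd he)) hlcm) hq ha
  intro i j
  have key : ∀ f : ℕ, (f:ℤ) ∣ (Nat.lcm d e : ℤ) → ∀ r : ℤ,
      ((f:ℤ) ∣ c * ↑(i + Nat.lcm d e * j) + r ↔ (f:ℤ) ∣ c * ↑i + r) := by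
    intro f hf r
    have heq : c * ↑(i + Nat.lcm d e * j) + r
        = (↑(Nat.lcm d e) * (c * j)) + (c * ↑i + r) := by push_cast; ring
    rw [heq]
    exact dvd_add_right (hf.mul_right _)
  simp only [add_sub_assoc]
  exact and_congr
    (key d (Int.natCast_dvd_natCast.mpr (Nat.dvd_lcm_left d e)) b)
    (key e (Int.natCast_dvd_natCast.mpr (Nat.dvd_lcm_right d e)) (b - 1))

lemma coprime_of_mem (c b : ℤ) (d e n : ℕ)
    (h1 : (d:ℤ) ∣ c * n + b) (h2 : (e:ℤ) ∣ c * n + b - 1) : Nat.Coprime d e := by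
  have hg1 : ((Nat.gcd d e : ℕ) : ℤ) ∣ c * n + b :=
    dvd_trans (Int.natCast_dvd_natCast.mpr (Nat.gcd_dvd_left d e)) h1
  have hg2 : ((Nat.gcd d e : ℕ) : ℤ) ∣ c * n + b - 1 :=
    dvd_trans (Int.natCast_dvd_natCast.mpr (Nat.gcd_dvd_right d e)) h2
  have : ((Nat.gcd d e : ℕ) : ℤ) ∣ 1 := by
    have := dvd_sub hg1 hg2
    simpa using this
  exact Nat.eq_one_of_dvd_one (Int.ofNat_dvd.mp (by simpa using this))

lemma card_le_one_lem (q : ℕ) (hq : 0 < q) (c b : ℤ) (hc : Int.gcd c q = 1)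
    (d e : ℕ) (hd : d ∣ q) (he : e ∣ q) (hde : d * e = q) :
    ((range q).filter
      (fun n : ℕ => (d:ℤ) ∣ c * n + b ∧ (e:ℤ) ∣ c * n + b - 1)).card ≤ 1 := by
  rw [Finset.card_le_one]
  intro n1 hn1 n2 hn2
  simp only [mem_filter, mem_range] at hn1 hn2
  obtain ⟨hn1q, hd1, he1⟩ := hn1
  obtain ⟨hn2q, hd2, he2⟩ := hn2
  have hcd : Int.gcd c d = 1 :=
    Nat.eq_one_of_dvd_one (hc ▸ Nat.dvd_gcd (Nat.gcd_dvd_left _ _)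
      ((Nat.gcd_dvd_right _ _).trans (by exact_mod_cast Int.natCast_dvd_natCast.mpr hd)))
  have hce : Int.gcd c e = 1 :=
    Nat.eq_one_of_dvd_one (hc ▸ Nat.dvd_gcd (Nat.gcd_dvd_left _ _)
      ((Nat.gcd_dvd_right _ _).trans (by exact_mod_cast Int.natCast_dvd_natCast.mpr he)))
  have hddvd : (d:ℤ) ∣ c * ((n1:ℤ) - n2) := by
    have : c * ((n1:ℤ) - n2) = (c * n1 + b) - (c * n2 + b) := by ring
    rw [this]
    exact dvd_sub hd1 hd2
  have heddvd : (e:ℤ) ∣ c * ((n1:ℤ) - n2) := by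
    have : c * ((n1:ℤ) - n2) = (c * n1 + b - 1) - (c * n2 + b - 1) := by ring
    rw [this]
    exact dvd_sub he1 he2
  have hcdcop : IsCoprime (d:ℤ) c := (Int.isCoprime_iff_gcd_eq_one.mpr hcd).symm
  have hcecop : IsCoprime (e:ℤ) c := (Int.isCoprime_iff_gcd_eq_one.mpr hce).symm
  have hd' : (d:ℤ) ∣ (n1:ℤ) - n2 := hcdcop.dvd_of_dvd_mul_left hddvd
  have he' : (e:ℤ) ∣ (n1:ℤ) - n2 := hcecop.dvd_of_dvd_mul_left heddvd
  have hdecop : IsCoprime (d:ℤ) (e:ℤ) := by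
    rw [Int.isCoprime_iff_gcd_eq_one, Int.gcd_natCast_natCast]
    exact coprime_of_mem c b d e n1 hd1 he1
  have hq' : ((d * e : ℕ):ℤ) ∣ (n1:ℤ) - n2 := by
    push_cast
    exact hdecop.mul_dvd hd' he'
  rw [hde] at hq'
  have : (n1:ℤ) - n2 = 0 := by
    apply Int.eq_zero_of_abs_lt_dvd hq'
    rw [abs_lt]
    constructor <;> push_cast <;> omega
  omega


lemma empty_case2 (q : ℕ) (hq : 2 ≤ q) (K V b : ℤ) (hbK : Int.gcd b K = 1)
    (hb1 : ∀ p : ℕ, p.Prime → (p : ℤ) ∣ K → p % 4 = 3 → p ≠ 3 →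
      Int.gcd (b - 1) p = 1)
    (hK : 1 < Int.gcd (q:ℤ) K) (d e : ℕ) (hd : d ∣ q) (he : e ∣ sFun q)
    (hlcm : Nat.lcm d e = q) :
    (range q).filter
      (fun n : ℕ => (d:ℤ) ∣ K * V * n + b ∧ (e:ℤ) ∣ K * V * n + b - 1) = ∅ := by
  rw [Finset.eq_empty_iff_forall_notMem]
  intro n hn
  simp only [mem_filter, mem_range] at hn
  obtain ⟨-, hdn, hen⟩ := hn
  set g : ℕ := Int.gcd (q:ℤ) K with hg
  have hp : g.minFac.Prime := Nat.minFac_prime (by omega)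
  set p : ℕ := g.minFac with hpdef
  have hpq : p ∣ q := by
    have h1 : (p:ℤ) ∣ (q:ℤ) := (Int.natCast_dvd_natCast.mpr (Nat.minFac_dvd g)).trans (Int.gcd_dvd_left _ _)
    exact_mod_cast h1
  have hpK : (p:ℤ) ∣ K := (Int.natCast_dvd_natCast.mpr (Nat.minFac_dvd g)).trans (Int.gcd_dvd_right _ _)
  have hpde : p ∣ d * e := dvd_trans (hlcm ▸ hpq) (Nat.lcm_dvd_mul d e)
  rcases (Nat.Prime.dvd_mul hp).mp hpde with hpd | hpe
  · -- p ∣ d, so p ∣ b, contradiction with gcd b K = 1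
    have hpb : (p:ℤ) ∣ b := by
      have h1 : (p:ℤ) ∣ K * V * n + b := (Int.natCast_dvd_natCast.mpr hpd).trans hdn
      have h2 : (p:ℤ) ∣ K * V * n := Dvd.dvd.mul_right (hpK.mul_right V) n
      have : b = (K * V * n + b) - K * V * n := by ring
      rw [this]; exact dvd_sub h1 h2
    have : (p:ℤ) ∣ (Int.gcd b K : ℤ) := Int.dvd_coe_gcd hpb hpK
    rw [hbK] at this
    have := Int.le_of_dvd one_pos this
    have := hp.two_le
    omega
  · -- p ∣ e ∣ sFun q
    have hps : p ∣ sFun q := hpe.trans he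
    rw [sFun] at hps
    obtain ⟨r, hr, hpr⟩ := (Prime.dvd_finset_prod_iff hp.prime _).mp hps
    simp only [mem_filter, Nat.mem_primeFactors] at hr
    obtain ⟨⟨hrprime, -, -⟩, hr4, hr3⟩ := hr
    have hpr' : p = r := (Nat.prime_dvd_prime_iff_eq hp hrprime).mp hpr
    subst hpr'
    have hpb1 : (p:ℤ) ∣ b - 1 := by
      have h1 : (p:ℤ) ∣ K * V * n + b - 1 := (Int.natCast_dvd_natCast.mpr hpe).trans hen
      have h2 : (p:ℤ) ∣ K * V * n := Dvd.dvd.mul_right (hpK.mul_right V) n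
      have : b - 1 = (K * V * n + b - 1) - K * V * n := by ring
      rw [this]; exact dvd_sub h1 h2
    have := hb1 p hp hpK hr4 hr3
    have hdc : (p:ℤ) ∣ (Int.gcd (b-1) (p:ℤ) : ℤ) := Int.dvd_coe_gcd hpb1 dvd_rfl
    rw [this] at hdc
    have := Int.le_of_dvd one_pos hdc
    have := hp.two_le
    omega

lemma expand_sum (q : ℕ) (hq : 0 < q) (a c b : ℤ) (s : ℕ) (hs : s ≠ 0) :
    (∑ n ∈ range q,
      if Int.gcd (c * n + b) q = 1 ∧ Int.gcd (c * n + b - 1) s = 1 then eFun q a n else 0)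
    = ∑ d ∈ q.divisors, ∑ e ∈ s.divisors, ((μ d : ℤ) : ℂ) * ((μ e : ℤ) : ℂ) *
        ∑ n ∈ (range q).filter
          (fun n : ℕ => (d:ℤ) ∣ c * n + b ∧ (e:ℤ) ∣ c * n + b - 1), eFun q a n := by
  have step1 : ∀ n : ℕ,
      (if Int.gcd (c * n + b) q = 1 ∧ Int.gcd (c * n + b - 1) s = 1 then eFun q a n else 0)
      = ∑ d ∈ q.divisors, ∑ e ∈ s.divisors,
          (if (d:ℤ) ∣ c * n + b then ((μ d : ℤ) : ℂ) else 0)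
          * (if (e:ℤ) ∣ c * n + b - 1 then ((μ e : ℤ) : ℂ) else 0) * eFun q a n := by
    intro n
    have h1 := moebius_indicator (c * n + b) q hq.ne'
    have h2 := moebius_indicator (c * n + b - 1) s hs
    calc (if Int.gcd (c * n + b) q = 1 ∧ Int.gcd (c * n + b - 1) s = 1 then eFun q a n else 0)
        = (if Int.gcd (c * n + b) q = 1 then (1:ℂ) else 0)
          * (if Int.gcd (c * n + b - 1) s = 1 then (1:ℂ) else 0) * eFun q a n := by
          by_cases hA : Int.gcd (c * n + b) q = 1 <;>
            by_cases hB : Int.gcd (c * n + b - 1) s = 1 <;> simp [hA, hB]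
      _ = (∑ d ∈ q.divisors, if (d:ℤ) ∣ c * n + b then ((μ d : ℤ) : ℂ) else 0)
          * (∑ e ∈ s.divisors, if (e:ℤ) ∣ c * n + b - 1 then ((μ e : ℤ) : ℂ) else 0)
          * eFun q a n := by rw [h1, h2]
      _ = _ := by rw [sum_mul_sum, sum_mul]; exact sum_congr rfl fun d _ => by rw [sum_mul]
  rw [sum_congr rfl fun n _ => step1 n, sum_comm]
  refine sum_congr rfl fun d hd => ?_
  rw [sum_comm]
  refine sum_congr rfl fun e he => ?_
  rw [mul_assoc, mul_sum, sum_filter, mul_sum]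
  refine sum_congr rfl fun n _ => ?_
  by_cases hA : (d:ℤ) ∣ c * n + b <;> by_cases hB : (e:ℤ) ∣ c * n + b - 1 <;>
    simp [hA, hB] <;> ring


lemma moebius_abs (d : ℕ) : ‖((μ d : ℤ) : ℂ)‖ ≤ 1 := by
  by_cases h : Squarefree d
  · rw [ArithmeticFunction.moebius_apply_of_squarefree h]
    push_cast
    rw [norm_pow]
    simp
  · rw [ArithmeticFunction.moebius_eq_zero_of_not_squarefree h]
    simp

theorem stmt_10 (q : ℕ) (hq : 2 ≤ q) (a K b V : ℤ)
    (ha : Int.gcd a q = 1) (hV : Int.gcd (q : ℤ) V = 1) (hbK : Int.gcd b K = 1)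
    (hb1 : ∀ p : ℕ, p.Prime → (p : ℤ) ∣ K → p % 4 = 3 → p ≠ 3 →
      Int.gcd (b - 1) p = 1) :
    (Int.gcd (q : ℤ) K = 1 →
      ‖∑ n ∈ Finset.range q,
        if Int.gcd (K * V * n + b) q = 1 ∧ Int.gcd (K * V * n + b - 1) (sFun q) = 1
        then Complex.exp (2 * (Real.pi : ℂ) * Complex.I * a * n / q) else 0‖
      ≤ (q.divisors.card : ℝ)) ∧
    (1 < Int.gcd (q : ℤ) K →
      (∑ n ∈ Finset.range q,
        if Int.gcd (K * V * n + b) q = 1 ∧ Int.gcd (K * V * n + b - 1) (sFun q) = 1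
        then Complex.exp (2 * (Real.pi : ℂ) * Complex.I * a * n / q) else 0) = 0) := by
  have hq0 : 0 < q := by omega
  have hsq : sFun q ∣ q :=
    dvd_trans (Finset.prod_dvd_prod_of_subset _ _ _ (filter_subset _ _))
      (Nat.prod_primeFactors_dvd q)
  have hs0 : sFun q ≠ 0 := (Nat.pos_of_dvd_of_pos hsq hq0).ne'
  have hE : ∀ n : ℕ, Complex.exp (2 * (Real.pi : ℂ) * Complex.I * a * n / q) = eFun q a n :=
    fun n => rfl
  simp only [hE]
  have hexp := expand_sum q hq0 a (K * V) b (sFun q) hs0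
  constructor
  · -- case gcd(q, K) = 1
    intro hK
    rw [hexp]
    have hc : Int.gcd (K * V) q = 1 := by
      rw [← Int.isCoprime_iff_gcd_eq_one]
      exact IsCoprime.mul_left
        (Int.isCoprime_iff_gcd_eq_one.mpr (by rwa [Int.gcd_comm]))
        (Int.isCoprime_iff_gcd_eq_one.mpr (by rwa [Int.gcd_comm]))
    have termbound : ∀ d ∈ q.divisors, ∀ e ∈ (sFun q).divisors,
        ‖((μ d : ℤ) : ℂ) * ((μ e : ℤ) : ℂ) *
          ∑ n ∈ (range q).filter
            (fun n : ℕ => (d:ℤ) ∣ K * V * n + b ∧ (e:ℤ) ∣ K * V * n + b - 1), eFun q a n‖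
        ≤ (if d * e = q then (1:ℝ) else 0) := by
      intro d hd e he
      have hd' : d ∣ q := (Nat.mem_divisors.mp hd).1
      have he' : e ∣ q := ((Nat.mem_divisors.mp he).1).trans hsq
      by_cases hde : d * e = q
      · rw [if_pos hde]
        have hcard := card_le_one_lem q hq0 (K * V) b hc d e hd' he' hde
        have hNabs : ‖∑ n ∈ (range q).filter
            (fun n : ℕ => (d:ℤ) ∣ K * V * n + b ∧ (e:ℤ) ∣ K * V * n + b - 1),
            eFun q a n‖ ≤ 1 := by
          calc ‖(∑ n ∈ (range q).filter
              (fun n : ℕ => (d:ℤ) ∣ K * V * n + b ∧ (e:ℤ) ∣ K * V * n + b - 1), eFun q a n)‖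
              ≤ ∑ n ∈ (range q).filter
                (fun n : ℕ => (d:ℤ) ∣ K * V * n + b ∧ (e:ℤ) ∣ K * V * n + b - 1),
                ‖eFun q a n‖ := norm_sum_le _ _
            _ = ∑ n ∈ (range q).filter
                (fun n : ℕ => (d:ℤ) ∣ K * V * n + b ∧ (e:ℤ) ∣ K * V * n + b - 1),
                (1:ℝ) := sum_congr rfl fun n _ => eFun_abs q hq0 a n
            _ ≤ 1 := by
                rw [sum_const, nsmul_eq_mul, mul_one]
                exact_mod_cast hcard
        rw [norm_mul, norm_mul]
        have h1 := moebius_abs d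
        have h2 := moebius_abs e
        have n1 : (0:ℝ) ≤ ‖((μ e : ℤ) : ℂ)‖ := norm_nonneg _
        have n2 : (0:ℝ) ≤ ‖∑ n ∈ (range q).filter
            (fun n : ℕ => (d:ℤ) ∣ K * V * n + b ∧ (e:ℤ) ∣ K * V * n + b - 1),
            eFun q a n‖ := norm_nonneg _
        exact mul_le_one₀ (mul_le_one₀ h1 n1 h2) n2 hNabs
      · rw [if_neg hde]
        have hN : (∑ n ∈ (range q).filter
            (fun n : ℕ => (d:ℤ) ∣ K * V * n + b ∧ (e:ℤ) ∣ K * V * n + b - 1),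
            eFun q a n) = 0 := by
          by_cases hA : ((range q).filter
              (fun n : ℕ => (d:ℤ) ∣ K * V * n + b ∧ (e:ℤ) ∣ K * V * n + b - 1)) = ∅
          · rw [hA]; rfl
          · obtain ⟨n, hn⟩ := Finset.nonempty_iff_ne_empty.mpr hA
            simp only [mem_filter] at hn
            have hcop := coprime_of_mem (K * V) b d e n hn.2.1 hn.2.2
            have hlcm : Nat.lcm d e = d * e := Nat.Coprime.lcm_eq_mul hcop
            exact term_vanish q hq0 a (K * V) b ha d e hd' he' (by rw [hlcm]; exact hde)
        rw [hN, mul_zero]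
        simp
    calc ‖∑ d ∈ q.divisors, ∑ e ∈ (sFun q).divisors, ((μ d : ℤ) : ℂ) * ((μ e : ℤ) : ℂ) *
          ∑ n ∈ (range q).filter
            (fun n : ℕ => (d:ℤ) ∣ K * V * n + b ∧ (e:ℤ) ∣ K * V * n + b - 1), eFun q a n‖
        ≤ ∑ d ∈ q.divisors, ∑ e ∈ (sFun q).divisors,
            ‖((μ d : ℤ) : ℂ) * ((μ e : ℤ) : ℂ) *
            ∑ n ∈ (range q).filter
              (fun n : ℕ => (d:ℤ) ∣ K * V * n + b ∧ (e:ℤ) ∣ K * V * n + b - 1), eFun q a n‖ := by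
          refine le_trans (norm_sum_le _ _) (sum_le_sum fun d _ => norm_sum_le _ _)
      _ ≤ ∑ d ∈ q.divisors, ∑ e ∈ (sFun q).divisors, (if d * e = q then (1:ℝ) else 0) := by
          exact sum_le_sum fun d hd => sum_le_sum fun e he => termbound d hd e he
      _ = ∑ e ∈ (sFun q).divisors, ∑ d ∈ q.divisors, (if d * e = q then (1:ℝ) else 0) :=
          sum_comm
      _ ≤ ∑ e ∈ (sFun q).divisors, (1:ℝ) := by
          refine sum_le_sum fun e he => ?_
          have he0 : e ≠ 0 := by
            intro h
            exact hs0 (by simpa [h] using (Nat.mem_divisors.mp he).1)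
          calc (∑ d ∈ q.divisors, if d * e = q then (1:ℝ) else 0)
              ≤ ∑ d ∈ q.divisors, (if d = q / e then (1:ℝ) else 0) := by
                refine sum_le_sum fun d _ => ?_
                split_ifs with h1 h2
                · exact le_refl 1
                · exact absurd (by rw [← h1, Nat.mul_div_cancel (Nat.pos_of_ne_zero he0) (m := d)]) h2
                · norm_num
                · exact le_refl 0
            _ = if q / e ∈ q.divisors then (1:ℝ) else 0 := sum_ite_eq' _ _ _
            _ ≤ 1 := by split_ifs <;> norm_num
      _ = ((sFun q).divisors.card : ℝ) := by rw [sum_const, nsmul_eq_mul, mul_one]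
      _ ≤ (q.divisors.card : ℝ) := by
          exact_mod_cast Finset.card_le_card (Nat.divisors_subset_of_dvd hq0.ne' hsq)
  · -- case gcd(q, K) > 1
    intro hK
    rw [hexp]
    refine sum_eq_zero fun d hd => sum_eq_zero fun e he => ?_
    have hd' : d ∣ q := (Nat.mem_divisors.mp hd).1
    have he' : e ∣ sFun q := (Nat.mem_divisors.mp he).1
    rcases eq_or_ne (Nat.lcm d e) q with hlcm | hlcm
    · rw [empty_case2 q hq K V b hbK hb1 hK d e hd' he' hlcm]
      simp
    · rw [term_vanish q hq0 a (K * V) b ha d e hd' (he'.trans hsq) hlcm, mul_zero]
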